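/- In the parallel-link Physarum dynamics with lengths L₁ < L₂ < … < Lₘ, the function V = Σ_{i≥2} (Lᵢ·ln Dᵢ - L₁·ln D₁) satisfies V' = Σ_{i≥2}(L₁ - Lᵢ) < 0 along any trajectory with all Dᵢ > 0. -/

import Mathlib

open Real Finset

/-- In the parallel-link Physarum dynamics (`Dᵢ' = Qᵢ - Dᵢ`,
`Qᵢ = Dᵢ·Δ/Lᵢ`, `Δ = 1/Σⱼ Dⱼ/Lⱼ`) with strictly increasing positive lengths
and at least two links, the function
`V = Σ_{i≥2} (Lᵢ·ln Dᵢ - L₁·ln D₁)` satisfies `V' = Σ_{i≥2}(L₁ - Lᵢ) < 0`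
along any trajectory with all `Dᵢ > 0`. -/
theorem parallel_links_lyapunov (m : ℕ) (L : Fin (m + 2) → ℝ)
    (hL : ∀ i, 0 < L i) (hLmono : StrictMono L)
    (D : ℝ → Fin (m + 2) → ℝ) (hpos : ∀ t i, 0 < D t i)
    (hdyn : ∀ t i, HasDerivAt (fun s => D s i)
      (D t i * (∑ j, D t j / L j)⁻¹ / L i - D t i) t) :
    ∀ t, HasDerivAt
        (fun s => ∑ i ∈ univ.erase 0, (L i * log (D s i) - L 0 * log (D s 0)))
        (∑ i ∈ univ.erase 0, (L 0 - L i)) t ∧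
      (∑ i ∈ univ.erase 0, (L 0 - L i)) < 0 := by
  intro t
  constructor
  · have key : ∀ i : Fin (m+2), HasDerivAt (fun s => log (D s i))
        ((∑ j, D t j / L j)⁻¹ / L i - 1) t := by
      intro i
      have h := (hdyn t i).log (ne_of_gt (hpos t i))
      convert h using 1
      have hD := (hpos t i).ne'
      field_simp
    have hterm : ∀ i ∈ univ.erase (0 : Fin (m+2)),
        HasDerivAt (fun s => L i * log (D s i) - L 0 * log (D s 0)) (L 0 - L i) t := by
      intro i hi
      have h2 := ((key i).const_mul (L i)).fun_sub ((key 0).const_mul (L 0))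
      refine h2.congr_deriv ?_
      have e1 : L i * ((∑ j, D t j / L j)⁻¹ / L i) = (∑ j, D t j / L j)⁻¹ := by
        rw [div_eq_mul_inv, ← mul_assoc, mul_comm (L i), mul_assoc,
          mul_inv_cancel₀ (hL i).ne', mul_one]
      have e2 : L 0 * ((∑ j, D t j / L j)⁻¹ / L 0) = (∑ j, D t j / L j)⁻¹ := by
        rw [div_eq_mul_inv, ← mul_assoc, mul_comm (L 0), mul_assoc,
          mul_inv_cancel₀ (hL 0).ne', mul_one]
      rw [mul_sub, mul_sub, e1, e2]
      ring
    exact HasDerivAt.fun_sum hterm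
  · apply Finset.sum_neg
    · intro i hi
      have hi0 : (0:Fin (m+2)) < i := by
        rcases Finset.mem_erase.mp hi with ⟨hne, _⟩
        exact Fin.pos_of_ne_zero hne
      linarith [hLmono hi0]
    · exact ⟨1, Finset.mem_erase.mpr ⟨by simp, Finset.mem_univ _⟩⟩
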